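/- Let (x_i)_{i=1}^{n} and (f_i)_{i=1}^{n} (n = n_{2j-1}) be block sequences in c₀₀ with range(f_{2i-1}) = range(x_{2i-1}), f_{2i} ∈ Λ^{k_i}(f_{2i-1}), and x_{2i} = S^{k_i}(x_{2i-1}) for some positive integers k_i, i = 1,…,n/2. Suppose there exist positive integers s_i with range(x_{2i-1}) ⊆ [2, 2^{s_i}] and k_i + s_i < k_{i+1} − s_{i+1} for all i. Then for every k ∈ ℕ: (a) there is at most one index i such that h(x_{2i}) ≠ 0 for some h ∈ Λ^k(f_{2i-1}); and (b) there is at most one index s such that (R^k f_{2s})(x_{2s-1}) ≠ 0. -/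

import Mathlib

open Finsupp

noncomputable section

/-- `S` sends basis vector `e i` to `e (2*i)`. -/
def S (f : ℕ →₀ ℝ) : ℕ →₀ ℝ :=
  Finsupp.embDomain ⟨fun i => 2 * i, fun a b h => by dsimp only at h; omega⟩ f

/-- `R g` has coordinates `(R g) i = g (2*i)`. -/
def R (g : ℕ →₀ ℝ) : ℕ →₀ ℝ :=
  Finsupp.comapDomain (fun i => 2 * i) g (fun a _ b _ h => by dsimp only at h; omega)

/-- block relation: every element of the support of `u` precedes every element of support of `v`. -/
def Blk (u v : ℕ →₀ ℝ) : Prop :=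
  ∀ a ∈ u.support, ∀ b ∈ v.support, a < b

/-- the smallest interval containing the support. -/
def rng (f : ℕ →₀ ℝ) : Finset ℕ :=
  if h : f.support.Nonempty then Finset.Icc (f.support.min' h) (f.support.max' h) else ∅

/-- dilation of an interval: `m * [r, s] = [m*r, m*s]`. -/
def dil (m : ℕ) (E : Finset ℕ) : Finset ℕ :=
  if h : E.Nonempty then Finset.Icc (m * E.min' h) (m * E.max' h) else ∅

/-- restriction of a vector to a set of coordinates. -/
def restrict (E : Finset ℕ) (g : ℕ →₀ ℝ) : ℕ →₀ ℝ :=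
  g.filter (· ∈ E)

/-- `Λ f`: preimages of `f` under `R`, restricted to the doubled range of `f`. -/
def Lam (f : ℕ →₀ ℝ) : Set (ℕ →₀ ℝ) :=
  {h | ∃ g, R g = f ∧ h = restrict (dil 2 (rng f)) g}

/-- iterates of `Λ`. -/
def LamIter : ℕ → (ℕ →₀ ℝ) → Set (ℕ →₀ ℝ)
  | 0, f => {f}
  | k + 1, f => ⋃ h ∈ LamIter k f, Lam h

/-- the canonical pairing of a functional with a vector. -/
def pair (f x : ℕ →₀ ℝ) : ℝ := ∑ i ∈ f.support, f i * x i

/-- the norm induced by a norming set `K`. -/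
def Nrm (K : Set (ℕ →₀ ℝ)) (x : ℕ →₀ ℝ) : ℝ :=
  sSup {y | ∃ f ∈ K, y = |pair f x|}

end


-- R iterate apply
lemma myR_apply (g : ℕ →₀ ℝ) (m : ℕ) : R g m = g (2 * m) := rfl

lemma R_iter_apply (K : ℕ) (g : ℕ →₀ ℝ) (m : ℕ) : (R^[K] g) m = g (2 ^ K * m) := by
  induction K generalizing g m with
  | zero => simp
  | succ n ih =>
    rw [Function.iterate_succ_apply, ih, myR_apply]
    congr 1
    ring

-- support subset of rng
lemma support_subset_rng (f : ℕ →₀ ℝ) : f.support ⊆ rng f := by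
  intro m hm
  unfold rng
  have hne : f.support.Nonempty := ⟨m, hm⟩
  rw [dif_pos hne, Finset.mem_Icc]
  exact ⟨Finset.min'_le _ _ hm, Finset.le_max' _ _ hm⟩

lemma rng_subset_Icc {f : ℕ →₀ ℝ} {r t : ℕ} (h : f.support ⊆ Finset.Icc r t) :
    rng f ⊆ Finset.Icc r t := by
  unfold rng
  split_ifs with hne
  · intro m hm
    rw [Finset.mem_Icc] at hm
    have h1 := h (f.support.min'_mem hne)
    have h2 := h (f.support.max'_mem hne)
    rw [Finset.mem_Icc] at h1 h2 ⊢
    omega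
  · simp

lemma dil_subset_Icc {E : Finset ℕ} {r t m : ℕ} (h : E ⊆ Finset.Icc r t) :
    dil m E ⊆ Finset.Icc (m * r) (m * t) := by
  unfold dil
  split_ifs with hne
  · intro x hx
    rw [Finset.mem_Icc] at hx
    have h1 := h (E.min'_mem hne)
    have h2 := h (E.max'_mem hne)
    rw [Finset.mem_Icc] at h1 h2 ⊢
    constructor
    · exact le_trans (Nat.mul_le_mul_left m h1.1) hx.1
    · exact le_trans hx.2 (Nat.mul_le_mul_left m h2.2)
  · simp

lemma support_restrict (E : Finset ℕ) (g : ℕ →₀ ℝ) : (restrict E g).support ⊆ E := by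
  intro m hm
  unfold restrict at hm
  rw [Finsupp.support_filter, Finset.mem_filter] at hm
  exact hm.2

lemma LamIter_support {K : ℕ} {f : ℕ →₀ ℝ} {r t : ℕ}
    (hf : f.support ⊆ Finset.Icc r t) :
    ∀ h ∈ LamIter K f, h.support ⊆ Finset.Icc (2 ^ K * r) (2 ^ K * t) := by
  induction K generalizing f with
  | zero => intro h hh; simp only [LamIter, Set.mem_singleton_iff] at hh; subst hh; simpa using hf
  | succ n ih =>
    intro h hh
    simp only [LamIter, Set.mem_iUnion] at hh
    obtain ⟨h', hh', hmem⟩ := hh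
    obtain ⟨g, _, rfl⟩ := hmem
    have hsub : h'.support ⊆ Finset.Icc (2 ^ n * r) (2 ^ n * t) := ih hf h' hh'
    have h1 : rng h' ⊆ Finset.Icc (2 ^ n * r) (2 ^ n * t) := rng_subset_Icc hsub
    have h2 : dil 2 (rng h') ⊆ Finset.Icc (2 * (2 ^ n * r)) (2 * (2 ^ n * t)) :=
      dil_subset_Icc h1
    rw [show 2 * (2 ^ n * r) = 2 ^ (n + 1) * r from by ring,
        show 2 * (2 ^ n * t) = 2 ^ (n + 1) * t from by ring] at h2
    exact (support_restrict _ _).trans h2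

lemma S_iter_support {K : ℕ} {f : ℕ →₀ ℝ} :
    ∀ m ∈ (S^[K] f).support, ∃ n ∈ f.support, m = 2 ^ K * n := by
  induction K generalizing f with
  | zero => intro m hm; exact ⟨m, by simpa using hm, by simp⟩
  | succ n ih =>
    intro m hm
    rw [Function.iterate_succ_apply] at hm
    obtain ⟨p, hp, rfl⟩ := ih m hm
    unfold S at hp
    rw [Finsupp.support_embDomain, Finset.mem_map] at hp
    obtain ⟨q, hq, rfl⟩ := hp
    exact ⟨q, hq, by show 2 ^ n * (2 * q) = 2 ^ (n + 1) * q; ring⟩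

lemma pair_ne_zero {f x : ℕ →₀ ℝ} (h : pair f x ≠ 0) :
    ∃ m, m ∈ f.support ∧ m ∈ x.support := by
  by_contra hc
  push_neg at hc
  apply h
  unfold pair
  apply Finset.sum_eq_zero
  intro m hm
  have : x m = 0 := Finsupp.notMem_support_iff.mp (hc m hm)
  simp [this]
/-- Lemma "(D7) implies (D5)". The pairs are indexed by `i : Fin M`:
`a i = x_{2i-1}`, `b i = x_{2i}`, `F i = f_{2i-1}`, `G i = f_{2i}`. -/
theorem D7_implies_D5 (M : ℕ) (a b F G : Fin M → (ℕ →₀ ℝ)) (k s : Fin M → ℕ)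
    -- the interleaved sequences are block sequences
    (hab : ∀ i : Fin M, Blk (a i) (b i))
    (hba : ∀ i : Fin M, ∀ h : (i : ℕ) + 1 < M, Blk (b i) (a ⟨(i : ℕ) + 1, h⟩))
    (hFG : ∀ i : Fin M, Blk (F i) (G i))
    (hGF : ∀ i : Fin M, ∀ h : (i : ℕ) + 1 < M, Blk (G i) (F ⟨(i : ℕ) + 1, h⟩))
    -- range(f_{2i-1}) = range(x_{2i-1})
    (hrngF : ∀ i, rng (F i) = rng (a i))
    -- f_{2i} ∈ Λ^{k_i}(f_{2i-1}) and x_{2i} = S^{k_i}(x_{2i-1}), with k_i ≥ 1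
    (hk : ∀ i, 1 ≤ k i)
    (hG : ∀ i, G i ∈ LamIter (k i) (F i))
    (hb : ∀ i, b i = S^[k i] (a i))
    -- (D7): range(x_{2i-1}) ⊆ [2, 2^{s_i}] and k_i + s_i < k_{i+1} - s_{i+1}
    (hs : ∀ i, 1 ≤ s i)
    (hrange : ∀ i, rng (a i) ⊆ Finset.Icc 2 (2 ^ (s i)))
    (hsep : ∀ i : Fin M, ∀ h : (i : ℕ) + 1 < M,
      k i + s i + s ⟨(i : ℕ) + 1, h⟩ < k ⟨(i : ℕ) + 1, h⟩) :
    -- (D5): for every `K ∈ ℕ`,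
    ∀ K : ℕ,
      -- (a) at most one index `i` with `h(x_{2i}) ≠ 0` for some `h ∈ Λ^K(f_{2i-1})`
      (∀ i j : Fin M,
        (∃ h ∈ LamIter K (F i), pair h (b i) ≠ 0) →
        (∃ h ∈ LamIter K (F j), pair h (b j) ≠ 0) → i = j) ∧
      -- (b) at most one index `i` with `(R^K f_{2i})(x_{2i-1}) ≠ 0`
      (∀ i j : Fin M,
        pair (R^[K] (G i)) (a i) ≠ 0 → pair (R^[K] (G j)) (a j) ≠ 0 → i = j) := by
  intro K
  -- basic support bounds
  have hsa : ∀ i, (a i).support ⊆ Finset.Icc 2 (2 ^ s i) := fun i =>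
    (support_subset_rng (a i)).trans (hrange i)
  have hsF : ∀ i, (F i).support ⊆ Finset.Icc 2 (2 ^ s i) := fun i => by
    have := (support_subset_rng (F i))
    rw [hrngF i] at this
    exact this.trans (hrange i)
  -- chain lemma
  have hchain : ∀ i j : Fin M, (i : ℕ) < (j : ℕ) → k i + s i + s j < k j := by
    have key : ∀ d : ℕ, ∀ i : Fin M, ∀ h : (i : ℕ) + d + 1 < M,
        k i + s i + s ⟨(i : ℕ) + d + 1, h⟩ < k ⟨(i : ℕ) + d + 1, h⟩ := by
      intro d
      induction d with
      | zero => intro i h; exact hsep i h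
      | succ n ih =>
        intro i h
        have h1 : (i : ℕ) + n + 1 < M := by omega
        have h2 := ih i h1
        have hlt : ((⟨(i : ℕ) + n + 1, h1⟩ : Fin M) : ℕ) + 1 < M := by
          simp only [Fin.val_mk]; omega
        have h3 := hsep ⟨(i : ℕ) + n + 1, h1⟩ hlt
        have he : (⟨((⟨(i : ℕ) + n + 1, h1⟩ : Fin M) : ℕ) + 1, hlt⟩ : Fin M)
            = ⟨(i : ℕ) + (n + 1) + 1, h⟩ := by
          apply Fin.ext; simp only [Fin.val_mk]; omega
        rw [he] at h3
        have hs1 := hs ⟨(i : ℕ) + n + 1, h1⟩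
        omega
    intro i j hij
    have hd : (j : ℕ) = (i : ℕ) + ((j : ℕ) - (i : ℕ) - 1) + 1 := by omega
    have hm : (i : ℕ) + ((j : ℕ) - (i : ℕ) - 1) + 1 < M := by omega
    have := key ((j : ℕ) - (i : ℕ) - 1) i hm
    have he : (⟨(i : ℕ) + ((j : ℕ) - (i : ℕ) - 1) + 1, hm⟩ : Fin M) = j := by
      apply Fin.ext; simp only [Fin.val_mk]; omega
    rwa [he] at this
  -- the window condition
  have pow_le : ∀ m n : ℕ, (2 : ℕ) ^ m ≤ 2 ^ n → m ≤ n := fun m n h =>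
    (Nat.pow_le_pow_iff_right (by norm_num)).mp h
  have windowA : ∀ i : Fin M, (∃ h ∈ LamIter K (F i), pair h (b i) ≠ 0) →
      k i + 1 ≤ K + s i ∧ K + 1 ≤ k i + s i := by
    intro i ⟨h, hh, hp⟩
    obtain ⟨m, hmf, hmx⟩ := pair_ne_zero hp
    have hhsupp := LamIter_support (hsF i) h hh hmf
    rw [Finset.mem_Icc] at hhsupp
    rw [hb i] at hmx
    obtain ⟨n, hn, rfl⟩ := S_iter_support m hmx
    have hn2 := hsa i hn
    rw [Finset.mem_Icc] at hn2
    constructor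
    · -- 2^{k i} * 2 ≤ 2^{k i} * n ≤ 2^K * 2^{s i}
      have : (2 : ℕ) ^ (k i + 1) ≤ 2 ^ (K + s i) := by
        rw [pow_succ, pow_add]
        calc 2 ^ k i * 2 ≤ 2 ^ k i * n := Nat.mul_le_mul_left _ hn2.1
        _ ≤ 2 ^ K * 2 ^ s i := hhsupp.2
      exact pow_le _ _ this
    · have : (2 : ℕ) ^ (K + 1) ≤ 2 ^ (k i + s i) := by
        rw [pow_succ, pow_add]
        calc 2 ^ K * 2 ≤ 2 ^ k i * n := hhsupp.1
        _ ≤ 2 ^ k i * 2 ^ s i := Nat.mul_le_mul_left _ hn2.2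
      exact pow_le _ _ this
  have windowB : ∀ i : Fin M, pair (R^[K] (G i)) (a i) ≠ 0 →
      k i + 1 ≤ K + s i ∧ K + 1 ≤ k i + s i := by
    intro i hp
    obtain ⟨m, hmf, hmx⟩ := pair_ne_zero hp
    have hGm : (2 : ℕ) ^ K * m ∈ (G i).support := by
      rw [Finsupp.mem_support_iff] at hmf ⊢
      rwa [R_iter_apply] at hmf
    have hGsupp := LamIter_support (hsF i) (G i) (hG i) hGm
    rw [Finset.mem_Icc] at hGsupp
    have hm2 := hsa i hmx
    rw [Finset.mem_Icc] at hm2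
    constructor
    · have : (2 : ℕ) ^ (k i + 1) ≤ 2 ^ (K + s i) := by
        rw [pow_succ, pow_add]
        calc 2 ^ k i * 2 ≤ 2 ^ K * m := hGsupp.1
        _ ≤ 2 ^ K * 2 ^ s i := Nat.mul_le_mul_left _ hm2.2
      exact pow_le _ _ this
    · have : (2 : ℕ) ^ (K + 1) ≤ 2 ^ (k i + s i) := by
        rw [pow_succ, pow_add]
        calc 2 ^ K * 2 ≤ 2 ^ K * m := Nat.mul_le_mul_left _ hm2.1
        _ ≤ 2 ^ k i * 2 ^ s i := hGsupp.2
      exact pow_le _ _ this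
  -- uniqueness from windows
  have uniq : ∀ i j : Fin M,
      (k i + 1 ≤ K + s i ∧ K + 1 ≤ k i + s i) →
      (k j + 1 ≤ K + s j ∧ K + 1 ≤ k j + s j) → i = j := by
    intro i j hi hj
    by_contra hne
    rcases Nat.lt_or_ge (i : ℕ) (j : ℕ) with h | h
    · have := hchain i j h; omega
    · have hlt : (j : ℕ) < (i : ℕ) := by
        rcases Nat.lt_or_ge (j : ℕ) (i : ℕ) with h' | h'
        · exact h'
        · exact absurd (Fin.ext (by omega)) hne
      have := hchain j i hlt; omega
  exact ⟨fun i j hi hj => uniq i j (windowA i hi) (windowA j hj),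
         fun i j hi hj => uniq i j (windowB i hi) (windowB j hj)⟩
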